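/- Let d ≥ 1 be an integer, let μ > 0 and ν > 0, let W ∈ ℝ^{d×d} be symmetric positive definite, and let u ∈ ℝ^d with ‖u‖ ≤ 2. Set v = W u and define the matrix M ∈ ℝ^{d×d} by M = (v vᵀ)/‖v‖² if ‖v‖ ≥ μ and M = 0 otherwise. Then for every z ∈ ℝ^d with ‖z‖ ≤ 1, writing z̃ = Proj_{S(W,ν)}(z), one has |z̃ᵀ M z̃ − zᵀ M z| ≤ 4ν/μ. -/

import Mathlib

open Matrix RealInnerProductSpace

/-- `spectralSubspace A c` is the linear subspace of `ℝ^d` spanned by the eigenvectors of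
`A` whose eigenvalues are at least `c`. -/
def spectralSubspace {d : ℕ} (A : Matrix (Fin d) (Fin d) ℝ) (c : ℝ) :
    Submodule ℝ (Fin d → ℝ) :=
  Submodule.span ℝ {v : Fin d → ℝ | ∃ μ : ℝ, c ≤ μ ∧ A *ᵥ v = μ • v}

/-- `IsOrthProjOnto P S` says that the matrix `P` is the orthogonal projection onto the
subspace `S`: every `P x` lies in `S` and `x - P x` is orthogonal to `S`. -/
def IsOrthProjOnto {d : ℕ} (P : Matrix (Fin d) (Fin d) ℝ)
    (S : Submodule ℝ (Fin d → ℝ)) : Prop :=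
  (∀ x, P *ᵥ x ∈ S) ∧ ∀ x, ∀ s ∈ S, (x - P *ᵥ x) ⬝ᵥ s = 0

set_option maxHeartbeats 1000000 in
/-- **Projection stability of the truncated rank-one direction matrix (Lemma `theM`).**
With `W` symmetric positive definite, `‖u‖ ≤ 2`, `v = W u`, and
`M = 1{‖v‖ ≥ μ} · v vᵀ / ‖v‖²`, projecting a unit vector `z` onto the span of the
eigenvectors of `W` with eigenvalue at least `ν` changes the quadratic form by at most
`4ν/μ`. -/
theorem projection_quadratic_form_stability {d : ℕ} (hd : 1 ≤ d)
    (μ ν : ℝ) (hμ : 0 < μ) (hν : 0 < ν)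
    (W : Matrix (Fin d) (Fin d) ℝ) (hW : W.PosDef)
    (u : Fin d → ℝ) (hu : Real.sqrt (u ⬝ᵥ u) ≤ 2)
    (v : Fin d → ℝ) (hv : v = W *ᵥ u)
    (M : Matrix (Fin d) (Fin d) ℝ)
    (hM : M = if μ ≤ Real.sqrt (v ⬝ᵥ v) then (v ⬝ᵥ v)⁻¹ • vecMulVec v v else 0)
    (Pr : Matrix (Fin d) (Fin d) ℝ) (hPr : IsOrthProjOnto Pr (spectralSubspace W ν))
    (z : Fin d → ℝ) (hz : Real.sqrt (z ⬝ᵥ z) ≤ 1) :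
    |(Pr *ᵥ z) ⬝ᵥ (M *ᵥ (Pr *ᵥ z)) - z ⬝ᵥ (M *ᵥ z)| ≤ 4 * ν / μ := by
  classical
  obtain ⟨hPr1, hPr2⟩ := hPr
  by_cases hc : μ ≤ Real.sqrt (v ⬝ᵥ v)
  swap
  · simp only [hM, if_neg hc, Matrix.zero_mulVec, dotProduct_zero, sub_zero, abs_zero]
    positivity
  -- bridging to EuclideanSpace
  set e : (Fin d → ℝ) ≃ EuclideanSpace ℝ (Fin d) := (WithLp.equiv 2 (Fin d → ℝ)).symm with he
  have dp : ∀ x y : Fin d → ℝ, x ⬝ᵥ y = ⟪e x, e y⟫ := by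
    intro x y
    simp [he, dotProduct, PiLp.inner_apply, RCLike.inner_apply, mul_comm]
  have nrm : ∀ x : Fin d → ℝ, Real.sqrt (x ⬝ᵥ x) = ‖e x‖ := by
    intro x; rw [EuclideanSpace.norm_eq]; simp [he, dotProduct, sq]
  have eadd : ∀ x y : Fin d → ℝ, e (x + y) = e x + e y := fun _ _ => rfl
  -- symmetry of W
  have hWT : Wᵀ = W := by simpa [Matrix.IsSymm] using hW.1
  have hsymm : ∀ x y : Fin d → ℝ, (W *ᵥ x) ⬝ᵥ y = x ⬝ᵥ (W *ᵥ y) := by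
    intro x y
    rw [dotProduct_mulVec, ← mulVec_transpose, hWT, dotProduct_comm]
  -- positivity of s = ‖v‖²
  have hs : (0 : ℝ) < v ⬝ᵥ v := by
    by_contra h
    push_neg at h
    have : Real.sqrt (v ⬝ᵥ v) = 0 := Real.sqrt_eq_zero_of_nonpos h
    linarith [hc, hμ]
  set s : ℝ := v ⬝ᵥ v with hsdef
  set r : ℝ := Real.sqrt s with hrdef
  have hr2 : r ^ 2 = s := Real.sq_sqrt hs.le
  have hrpos : 0 < r := lt_of_lt_of_le hμ hc
  -- quadratic form formula
  have qf : ∀ x : Fin d → ℝ, x ⬝ᵥ (M *ᵥ x) = s⁻¹ * ((v ⬝ᵥ x) * (v ⬝ᵥ x)) := by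
    intro x
    have hvv : vecMulVec v v *ᵥ x = (v ⬝ᵥ x) • v := by
      ext i
      simp [vecMulVec_apply, mulVec, dotProduct, Finset.mul_sum, mul_comm, mul_left_comm]
    rw [hM, if_pos hc, smul_mulVec, hvv, dotProduct_smul, dotProduct_smul,
      smul_eq_mul, smul_eq_mul, dotProduct_comm x v]
  set zt : Fin d → ℝ := Pr *ᵥ z with hzt
  set w : Fin d → ℝ := z - zt with hw
  -- norms
  have hznorm : ‖e z‖ ≤ 1 := by rw [← nrm]; exact hz
  have hzwt : e z = e w + e zt := by
    rw [← eadd]; congr 1; simp [hw]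
  have hwzt_inner : ⟪e w, e zt⟫ = 0 := by
    rw [← dp]
    exact hPr2 z zt (hPr1 z)
  have hpyth : ‖e z‖ ^ 2 = ‖e w‖ ^ 2 + ‖e zt‖ ^ 2 := by
    rw [hzwt, norm_add_sq_real, hwzt_inner]; ring
  have hwnorm : ‖e w‖ ≤ 1 := by nlinarith [norm_nonneg (e w), norm_nonneg (e zt), norm_nonneg (e z)]
  have hztnorm : ‖e zt‖ ≤ 1 := by nlinarith [norm_nonneg (e w), norm_nonneg (e zt), norm_nonneg (e z)]
  -- eigen decomposition facts
  have ih : W.IsHermitian := hW.1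
  set B := ih.eigenvectorBasis with hB
  set lam := ih.eigenvalues with hlam
  set f : Fin d → Fin d → ℝ := fun i => WithLp.equiv 2 (Fin d → ℝ) (B i) with hf
  have hef : ∀ i, e (f i) = B i := fun i => (WithLp.equiv 2 (Fin d → ℝ)).symm_apply_apply (B i)
  have heig : ∀ i, W *ᵥ f i = lam i • f i := fun i => ih.mulVec_eigenvectorBasis i
  have hwo : ∀ i, ν ≤ lam i → ⟪B i, e w⟫ = 0 := by
    intro i hi
    have hmem : f i ∈ spectralSubspace W ν :=
      Submodule.subset_span ⟨lam i, hi, heig i⟩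
    have := hPr2 z (f i) hmem
    rw [← hw] at this
    rw [real_inner_comm, ← hef i, ← dp]
    exact this
  -- coefficient of W w
  have hcoef : ∀ i, ⟪B i, e (W *ᵥ w)⟫ = lam i * ⟪B i, e w⟫ := by
    intro i
    rw [← hef i, ← dp, ← dp, ← hsymm, heig i, smul_dotProduct, smul_eq_mul]
  -- ‖W w‖ ≤ ν ‖w‖
  have hWw : ‖e (W *ᵥ w)‖ ≤ ν * ‖e w‖ := by
    have hnsq : ∀ x : EuclideanSpace ℝ (Fin d), ‖x‖ ^ 2 = ∑ i, ⟪B i, x⟫ ^ 2 := by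
      intro x
      rw [← B.repr.norm_map x, EuclideanSpace.norm_eq]
      rw [Real.sq_sqrt (by positivity)]
      congr 1; ext i
      rw [B.repr_apply_apply, Real.norm_eq_abs, sq_abs]
    have hterm : ∀ i, ⟪B i, e (W *ᵥ w)⟫ ^ 2 ≤ ν ^ 2 * ⟪B i, e w⟫ ^ 2 := by
      intro i
      rw [hcoef i]
      by_cases hi : ν ≤ lam i
      · rw [hwo i hi]; simp
      · push_neg at hi
        have h0 : 0 < lam i := hW.eigenvalues_pos i
        rw [mul_pow]
        exact mul_le_mul_of_nonneg_right (by nlinarith) (sq_nonneg _)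
    have hsq : ‖e (W *ᵥ w)‖ ^ 2 ≤ (ν * ‖e w‖) ^ 2 := by
      rw [hnsq, mul_pow, hnsq (e w), Finset.mul_sum]
      exact Finset.sum_le_sum fun i _ => hterm i
    calc ‖e (W *ᵥ w)‖ = Real.sqrt (‖e (W *ᵥ w)‖ ^ 2) := (Real.sqrt_sq (norm_nonneg _)).symm
      _ ≤ Real.sqrt ((ν * ‖e w‖) ^ 2) := Real.sqrt_le_sqrt hsq
      _ = ν * ‖e w‖ := Real.sqrt_sq (by positivity)
  -- |⟨v, w⟩| ≤ 2ν
  have hunorm : ‖e u‖ ≤ 2 := by rw [← nrm]; exact hu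
  have hvw : |v ⬝ᵥ w| ≤ 2 * ν := by
    have h1 : v ⬝ᵥ w = u ⬝ᵥ (W *ᵥ w) := by rw [hv, hsymm]
    rw [h1, dp]
    calc |⟪e u, e (W *ᵥ w)⟫| ≤ ‖e u‖ * ‖e (W *ᵥ w)‖ := abs_real_inner_le_norm _ _
      _ ≤ 2 * (ν * ‖e w‖) := by
          apply mul_le_mul hunorm hWw (norm_nonneg _) (by norm_num)
      _ ≤ 2 * (ν * 1) := by
          apply mul_le_mul_of_nonneg_left _ (by norm_num)
          exact mul_le_mul_of_nonneg_left hwnorm hν.le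
      _ = 2 * ν := by ring
  -- bounds on a, b
  set a : ℝ := v ⬝ᵥ zt with ha
  set b : ℝ := v ⬝ᵥ z with hb
  have hvnorm : ‖e v‖ = r := by rw [← nrm]
  have haabs : |a| ≤ r := by
    rw [ha, dp]
    calc |⟪e v, e zt⟫| ≤ ‖e v‖ * ‖e zt‖ := abs_real_inner_le_norm _ _
      _ ≤ r * 1 := by rw [hvnorm]; exact mul_le_mul_of_nonneg_left hztnorm hrpos.le
      _ = r := mul_one r
  have hbabs : |b| ≤ r := by
    rw [hb, dp]
    calc |⟪e v, e z⟫| ≤ ‖e v‖ * ‖e z‖ := abs_real_inner_le_norm _ _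
      _ ≤ r * 1 := by rw [hvnorm]; exact mul_le_mul_of_nonneg_left hznorm hrpos.le
      _ = r := mul_one r
  have hdiff : |a - b| ≤ 2 * ν := by
    have : a - b = -(v ⬝ᵥ w) := by
      rw [ha, hb, hw, dotProduct_sub]; ring
    rw [this, abs_neg]
    exact hvw
  -- final algebra
  rw [qf zt, qf z, ← ha, ← hb]
  have key : s⁻¹ * (a * a) - s⁻¹ * (b * b) = (a * a - b * b) / s := by
    field_simp
  rw [key, abs_div, abs_of_pos hs, div_le_div_iff₀ hs hμ]
  have h1 : |a * a - b * b| ≤ 2 * ν * (2 * r) := by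
    calc |a * a - b * b| = |a - b| * |a + b| := by rw [← abs_mul]; ring_nf
      _ ≤ 2 * ν * (|a| + |b|) :=
          mul_le_mul hdiff (abs_add_le a b) (abs_nonneg _) (by positivity)
      _ ≤ 2 * ν * (r + r) := by
          apply mul_le_mul_of_nonneg_left (add_le_add haabs hbabs) (by positivity)
      _ = 2 * ν * (2 * r) := by ring
  nlinarith [abs_nonneg (a * a - b * b), hc, hrpos, hμ, hν]
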